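/- Let 𝒯 = 𝒯(A,P,Q,g) be the triole ring. Let X^A : A → A, X^P : P → P, X^Q : Q → Q be additive maps and define D : 𝒯 → 𝒯 by D(a,p,q) := (X^A(a), X^P(p), X^Q(q)). Then D satisfies the Leibniz rule D(t·t′) = D(t)·t′ + t·D(t′) for all t, t′ ∈ 𝒯 if and only if: X^A is a derivation of A; X^P is a Der-operator on P with symbol X^A; X^Q is a Der-operator on Q with symbol X^A; and X^Q(g(p₁,p₂)) = g(X^P(p₁),p₂) + g(p₁,X^P(p₂)) for all p₁,p₂ ∈ P. -/

import Mathlib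

/-- The multiplication of the triole ring `𝒯 = 𝒯(A,P,Q,g)` on `A × P × Q`. -/
def trioleMul {A P Q : Type*} [CommRing A]
    [AddCommGroup P] [Module A P] [AddCommGroup Q] [Module A Q]
    (g : P →ₗ[A] P →ₗ[A] Q) : A × P × Q → A × P × Q → A × P × Q := fun t t' =>
  (t.1 * t'.1, t.1 • t'.2.1 + t'.1 • t.2.1,
    t.1 • t'.2.2 + t'.1 • t.2.2 + g t.2.1 t'.2.1)

/-- A degree-zero triolic derivation `D(a,p,q) = (X^A a, X^P p, X^Q q)`
satisfies the Leibniz rule iff `X^A` is a derivation of `A`, `X^P` and `X^Q` are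
Der-operators on `P` and `Q` with symbol `X^A`, and `X^Q` is a symmetry of `g`
relative to `X^P`. -/
theorem triolic_degree_zero_derivation {A P Q : Type*} [CommRing A]
    [AddCommGroup P] [Module A P] [AddCommGroup Q] [Module A Q]
    (g : P →ₗ[A] P →ₗ[A] Q) (hg : ∀ p p' : P, g p p' = g p' p)
    (XA : A → A) (hXA : ∀ a a', XA (a + a') = XA a + XA a')
    (XP : P → P) (hXP : ∀ p p', XP (p + p') = XP p + XP p')
    (XQ : Q → Q) (hXQ : ∀ q q', XQ (q + q') = XQ q + XQ q') :
    let D : A × P × Q → A × P × Q := fun t => (XA t.1, XP t.2.1, XQ t.2.2)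
    (∀ t t', D (trioleMul g t t') = trioleMul g (D t) t' + trioleMul g t (D t')) ↔
      ((∀ a a', XA (a * a') = XA a * a' + a * XA a') ∧
       (∀ (a : A) (p : P), XP (a • p) = XA a • p + a • XP p) ∧
       (∀ (a : A) (q : Q), XQ (a • q) = XA a • q + a • XQ q) ∧
       (∀ p₁ p₂ : P, XQ (g p₁ p₂) = g (XP p₁) p₂ + g p₁ (XP p₂))) := by
  have XA0 : XA 0 = 0 := by
    have h0 := hXA 0 0; rw [add_zero] at h0; exact left_eq_add.mp h0
  have XP0 : XP 0 = 0 := by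
    have h0 := hXP 0 0; rw [add_zero] at h0; exact left_eq_add.mp h0
  have XQ0 : XQ 0 = 0 := by
    have h0 := hXQ 0 0; rw [add_zero] at h0; exact left_eq_add.mp h0
  intro D
  constructor
  · intro h
    refine ⟨?_, ?_, ?_, ?_⟩
    · intro a a'
      have := congrArg Prod.fst (h (a, 0, 0) (a', 0, 0))
      simpa [trioleMul, D] using this
    · intro a p
      have := congrArg (fun t => t.2.1) (h (a, 0, 0) (1, p, 0))
      simpa [trioleMul, D, XP0] using this
    · intro a q
      have := congrArg (fun t => t.2.2) (h (a, 0, 0) (1, 0, q))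
      simpa [trioleMul, D, XP0, XQ0] using this
    · intro p₁ p₂
      have := congrArg (fun t => t.2.2) (h (0, p₁, 0) (0, p₂, 0))
      simpa [trioleMul, D, XP0, XQ0, XA0] using this
  · rintro ⟨h1, h2, h3, h4⟩ ⟨a, p, q⟩ ⟨a', p', q'⟩
    simp only [trioleMul, D, Prod.mk_add_mk, Prod.mk.injEq]
    refine ⟨h1 a a', ?_, ?_⟩
    · rw [hXP, h2, h2]; abel
    · rw [hXQ, hXQ, h3, h3, h4]; abel
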